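/- Let q be a quantity matrix and let d, e be nonnegative N×M arrays with d_{ij} > 0 ⟺ e_{ij} > 0 ⟺ q_{ij} > 0. Consider the system in strictly positive unknowns f ∈ ℝ^M and g ∈ ℝ^N: f_j = Σ_{n=1}^N (d_{nj} / Σ_{n'=1}^N d_{n'j}) · (e_{nj} / g_n) for j = 1,…,M and g_i = Σ_{m=1}^M (d_{im} / Σ_{m'=1}^M d_{im'}) · (e_{im} / f_m) for i = 1,…,N. Then a strictly positive solution (f, g), unique up to the rescaling (f, g) ↦ (γ f, (1/γ) g) for γ > 0, exists if and only if the quantity matrix q is connected. -/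

import Mathlib

open Finset

/-- Connectedness of the quantity matrix `q`. -/
def QConnected {N M : ℕ} (q : Fin N → Fin M → ℝ) : Prop :=
  ∀ J : Finset (Fin M), J.Nonempty → J ≠ Finset.univ →
    ∃ j ∈ J, ∃ l ∉ J, ∃ k, 0 < q k j ∧ 0 < q k l

/-- `(f, g)` solves the system of Theorem 5 with weight arrays `d` and `e`. -/
def Th5Sol {N M : ℕ} (d e : Fin N → Fin M → ℝ) (f : Fin M → ℝ) (g : Fin N → ℝ) : Prop :=
  (∀ j, f j = ∑ n, (d n j / ∑ n', d n' j) * (e n j / g n)) ∧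
  (∀ i, g i = ∑ m, (d i m / ∑ m', d i m') * (e i m / f m))

namespace Stmt14Aux
open Real

lemma continuous_inf' {ι : Type*} {X : Type*} [TopologicalSpace X] (S : Finset ι) (hS : S.Nonempty)
    (F : ι → X → ℝ) (hF : ∀ i, Continuous (F i)) :
    Continuous (fun x => S.inf' hS (fun i => F i x)) := by
  induction hS using Finset.Nonempty.cons_induction with
  | singleton a => simpa using hF a
  | cons a s ha hs ih =>
      have : (fun x => (Finset.cons a s ha).inf' (Finset.cons_nonempty ha) (fun i => F i x))
        = fun x => min (F a x) (s.inf' hs (fun i => F i x)) := by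
        funext x; rw [Finset.inf'_cons]
      rw [this]; exact (hF a).min ih

lemma inf'_smul {ι : Type*} (S : Finset ι) (hS : S.Nonempty) (a : ℝ) (ha : 0 ≤ a) (f : ι → ℝ) :
    S.inf' hS (fun i => a * f i) = a * S.inf' hS f := by
  rw [Finset.apply_inf'_eq_inf'_comp hS (fun x => a * x)]
  · rfl
  · intro x y; exact mul_min_of_nonneg x y ha

lemma exists_sol {N M : ℕ} (hN : 0 < N) (hM : 0 < M) (d e : Fin N → Fin M → ℝ)
    (hd0 : ∀ i j, 0 ≤ d i j) (he0 : ∀ i j, 0 ≤ e i j)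
    (hde : ∀ i j, 0 < d i j ↔ 0 < e i j)
    (ht : ∀ i, 0 < ∑ m, d i m) (hs : ∀ j, 0 < ∑ n, d n j)
    (hconn : ∀ J : Finset (Fin M), J.Nonempty → J ≠ univ →
      ∃ j ∈ J, ∃ l ∉ J, ∃ k, 0 < d k j ∧ 0 < d k l) :
    ∃ (f : Fin M → ℝ) (g : Fin N → ℝ),
      (∀ j, 0 < f j) ∧ (∀ i, 0 < g i) ∧ Th5Sol d e f g := by
  classical
  haveI : Nonempty (Fin M) := ⟨⟨0, hM⟩⟩
  haveI : Nonempty (Fin N) := ⟨⟨0, hN⟩⟩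
  set t : Fin N → ℝ := fun i => ∑ m, d i m with htdef
  set s : Fin M → ℝ := fun j => ∑ n, d n j with hsdef
  set c : Fin N → Fin M → ℝ := fun i j => d i j * e i j with hcdef
  have hc0 : ∀ i j, 0 ≤ c i j := fun i j => mul_nonneg (hd0 i j) (he0 i j)
  have hcd : ∀ i j, 0 < d i j → 0 < c i j := fun i j h => mul_pos h ((hde i j).1 h)
  -- support of each row
  set supp : Fin N → Finset (Fin M) := fun i => univ.filter (fun m => 0 < d i m) with hsuppdef
  have hsupp : ∀ i, (supp i).Nonempty := by
    intro i
    by_contra h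
    rw [Finset.not_nonempty_iff_eq_empty] at h
    have : ∀ m, d i m = 0 := by
      intro m
      by_contra hm
      have : m ∈ supp i := by
        simp only [hsuppdef, mem_filter, mem_univ, true_and]
        exact lt_of_le_of_ne (hd0 i m) (Ne.symm hm)
      simp [h] at this
    have : t i = 0 := by simp [htdef, this]
    exact absurd this (ne_of_gt (ht i))
  have hmemsupp : ∀ i m, m ∈ supp i ↔ 0 < d i m := by
    intro i m; simp [hsuppdef]
  -- G and Φ
  set G : (Fin M → ℝ) → Fin N → ℝ := fun x i => ∑ m, (c i m / t i) * Real.exp (-x m) with hGdef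
  have hG : ∀ x i, 0 < G x i := by
    intro x i
    apply Finset.sum_pos'
    · intro m _
      exact mul_nonneg (div_nonneg (hc0 i m) (le_of_lt (ht i))) (le_of_lt (Real.exp_pos _))
    · obtain ⟨m, hm⟩ := hsupp i
      rw [hmemsupp] at hm
      exact ⟨m, mem_univ m, mul_pos (div_pos (hcd i m hm) (ht i)) (Real.exp_pos _)⟩
  set Φ : (Fin M → ℝ) → ℝ :=
    fun x => (∑ j, s j * x j) + ∑ i, t i * Real.log (G x i) with hΦdef
  have hst : ∑ j, s j = ∑ i, t i := by
    simp only [hsdef, htdef]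
    exact Finset.sum_comm
  have contG : ∀ i, Continuous (fun x : Fin M → ℝ => G x i) := by
    intro i
    apply continuous_finset_sum
    intro m _
    exact continuous_const.mul (((continuous_apply m).neg).rexp)
  have contΦ : Continuous Φ := by
    apply Continuous.add
    · exact continuous_finset_sum _ (fun j _ => continuous_const.mul (continuous_apply j))
    · exact continuous_finset_sum _ (fun i _ =>
        continuous_const.mul ((contG i).log (fun x => ne_of_gt (hG x i))))
  -- μ and r
  set μ : (Fin M → ℝ) → Fin N → ℝ := fun x i => (supp i).inf' (hsupp i) x with hμdef
  set r : (Fin M → ℝ) → ℝ := fun x => (∑ j, s j * x j) - ∑ i, t i * μ x i with hrdef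
  have hμle : ∀ x i m, 0 < d i m → μ x i ≤ x m := by
    intro x i m hm
    exact Finset.inf'_le _ ((hmemsupp i m).2 hm)
  set L : Fin N → ℝ := fun i => (supp i).inf' (hsupp i) (fun m => Real.log (c i m / t i)) with hLdef
  have hlogG : ∀ x i, L i - μ x i ≤ Real.log (G x i) := by
    intro x i
    obtain ⟨m0, hm0S, hm0⟩ := Finset.exists_mem_eq_inf' (hsupp i) x
    have hd' : 0 < d i m0 := (hmemsupp i m0).1 hm0S
    have hc' : 0 < c i m0 / t i := div_pos (hcd i m0 hd') (ht i)
    have h1 : (c i m0 / t i) * Real.exp (-x m0) ≤ G x i := by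
      apply Finset.single_le_sum (f := fun m => (c i m / t i) * Real.exp (-x m))
        (fun m _ => mul_nonneg (div_nonneg (hc0 i m) (le_of_lt (ht i))) (Real.exp_pos _).le)
        (mem_univ m0)
    have h2 : Real.log ((c i m0 / t i) * Real.exp (-x m0)) ≤ Real.log (G x i) :=
      Real.log_le_log (mul_pos hc' (Real.exp_pos _)) h1
    rw [Real.log_mul (ne_of_gt hc') (Real.exp_ne_zero _), Real.log_exp] at h2
    have h3 : L i ≤ Real.log (c i m0 / t i) := Finset.inf'_le _ hm0S
    have h4 : μ x i = x m0 := hm0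
    linarith
  have hΦr : ∀ x, r x + ∑ i, t i * L i ≤ Φ x := by
    intro x
    have : ∑ i, t i * (L i - μ x i) ≤ ∑ i, t i * Real.log (G x i) :=
      Finset.sum_le_sum (fun i _ => mul_le_mul_of_nonneg_left (hlogG x i) (ht i).le)
    simp only [mul_sub] at this
    rw [Finset.sum_sub_distrib] at this
    simp only [hrdef, hΦdef]
    linarith
  -- r as nonneg double sum
  have hr_eq : ∀ x, r x = ∑ i, ∑ j, d i j * (x j - μ x i) := by
    intro x
    simp only [hrdef, hsdef, htdef]
    rw [Finset.sum_comm (f := fun i j => d i j * (x j - μ x i))]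
    simp only [mul_sub, Finset.sum_sub_distrib]
    congr 1
    · congr 1; ext j; rw [Finset.sum_mul]
    · rw [Finset.sum_comm]; congr 1; ext i; rw [Finset.sum_mul]
  have hterm_nonneg : ∀ x i j, 0 ≤ d i j * (x j - μ x i) := by
    intro x i j
    rcases eq_or_lt_of_le (hd0 i j) with h | h
    · rw [← h]; simp
    · exact mul_nonneg h.le (by linarith [hμle x i j h])
  have hr_nonneg : ∀ x, 0 ≤ r x := by
    intro x; rw [hr_eq]
    exact Finset.sum_nonneg fun i _ => Finset.sum_nonneg fun j _ => hterm_nonneg x i j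
  have hr_pos : ∀ x : Fin M → ℝ, (∑ j, x j = 0) → x ≠ 0 → 0 < r x := by
    intro x hx0 hxne
    set mn := univ.inf' univ_nonempty x with hmndef
    have hJne : (univ.filter (fun m => x m = mn)).Nonempty := by
      obtain ⟨m0, _, hm0⟩ := Finset.exists_mem_eq_inf' (univ_nonempty) x
      exact ⟨m0, by simp [hm0.symm]; exact hmndef.symm⟩
    have hJprop : univ.filter (fun m => x m = mn) ≠ univ := by
      intro h
      have hall : ∀ m, x m = mn := by
        intro m
        have : m ∈ univ.filter (fun m => x m = mn) := by rw [h]; exact mem_univ m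
        simpa using this
      have : ∑ j, x j = (M : ℝ) * mn := by
        rw [Finset.sum_congr rfl (fun j _ => hall j)]
        simp [Finset.card_univ, mul_comm]
      rw [hx0] at this
      have hMne : (M : ℝ) ≠ 0 := Nat.cast_ne_zero.mpr hM.ne'
      have hmn0 : mn = 0 := by
        rcases mul_eq_zero.1 this.symm with h' | h'
        · exact absurd h' hMne
        · exact h'
      exact hxne (funext fun m => by rw [hall m, hmn0]; rfl)
    obtain ⟨j, hjJ, l, hlJ, k, hkj, hkl⟩ := hconn _ hJne hJprop
    rw [hr_eq]
    apply Finset.sum_pos' (fun i _ => Finset.sum_nonneg fun j _ => hterm_nonneg x i j)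
    refine ⟨k, mem_univ k, ?_⟩
    apply Finset.sum_pos' (fun j _ => hterm_nonneg x k j)
    refine ⟨l, mem_univ l, ?_⟩
    have hxj : x j = mn := by simpa using hjJ
    have hxl : mn < x l := by
      have h1 : mn ≤ x l := Finset.inf'_le _ (mem_univ l)
      have h2 : x l ≠ mn := by simpa using hlJ
      exact lt_of_le_of_ne h1 (Ne.symm h2)
    have hμk : μ x k ≤ mn := hxj ▸ hμle x k j hkj
    exact mul_pos hkl (by linarith)
  -- homogeneity of r
  have hμ_smul : ∀ (a : ℝ), 0 ≤ a → ∀ x i, μ (a • x) i = a * μ x i := by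
    intro a ha x i
    have h1 : μ (a • x) i = (supp i).inf' (hsupp i) (fun m => a * x m) := rfl
    rw [h1, inf'_smul _ _ a ha]
  have hr_smul : ∀ (a : ℝ), 0 ≤ a → ∀ x, r (a • x) = a * r x := by
    intro a ha x
    have h1 : ∑ j, s j * (a • x) j = a * ∑ j, s j * x j := by
      rw [Finset.mul_sum]
      exact Finset.sum_congr rfl fun j _ => by simp [Pi.smul_apply, smul_eq_mul]; ring
    have h2 : ∑ i, t i * μ (a • x) i = a * ∑ i, t i * μ x i := by
      rw [Finset.mul_sum]
      exact Finset.sum_congr rfl fun i _ => by rw [hμ_smul a ha]; ring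
    simp only [hrdef, h1, h2]
    ring
  have hr0 : r 0 = 0 := by
    have hμ0 : ∀ i, μ (0 : Fin M → ℝ) i = 0 := by
      intro i
      have : μ (0 : Fin M → ℝ) i = (supp i).inf' (hsupp i) (fun _ => (0:ℝ)) := rfl
      rw [this, Finset.inf'_const]
    simp only [hrdef, hμ0]
    simp
  have contr : Continuous r := by
    apply Continuous.sub
    · exact continuous_finset_sum _ (fun j _ => continuous_const.mul (continuous_apply j))
    · apply continuous_finset_sum
      intro i _
      exact continuous_const.mul
        (continuous_inf' (supp i) (hsupp i) (fun m (x : Fin M → ℝ) => x m) (fun m => continuous_apply m))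
  -- epsilon bound
  have hεbound : ∃ ε : ℝ, 0 < ε ∧ ∀ x : Fin M → ℝ, (∑ j, x j = 0) → ε * ‖x‖ ≤ r x := by
    set Sph : Set (Fin M → ℝ) := {x | (∑ j, x j = 0) ∧ ‖x‖ = 1} with hSphdef
    have hscale : ∀ x : Fin M → ℝ, (∑ j, x j = 0) → x ≠ 0 → (‖x‖⁻¹ • x) ∈ Sph := by
      intro x hx0 hxne
      constructor
      · have : ∑ j, (‖x‖⁻¹ • x) j = ‖x‖⁻¹ * ∑ j, x j := by
          rw [Finset.mul_sum]
          exact Finset.sum_congr rfl fun j _ => rfl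
        rw [this, hx0, mul_zero]
      · rw [norm_smul, norm_inv, norm_norm]
        exact inv_mul_cancel₀ (norm_ne_zero_iff.2 hxne)
    by_cases hne : Sph.Nonempty
    · have hSclosed : IsClosed Sph := by
        have : Sph = {x : Fin M → ℝ | ∑ j, x j = 0} ∩ {x | ‖x‖ = 1} := rfl
        rw [this]
        exact IsClosed.inter
          (isClosed_eq (continuous_finset_sum _ fun j _ => continuous_apply j) continuous_const)
          (isClosed_eq continuous_norm continuous_const)
      have hSbdd : Sph ⊆ Metric.closedBall 0 1 := by
        intro x hx
        rw [Metric.mem_closedBall, dist_zero_right, hx.2]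
      have hScompact : IsCompact Sph :=
        Metric.isCompact_of_isClosed_isBounded hSclosed
          (Bornology.IsBounded.subset Metric.isBounded_closedBall hSbdd)
      obtain ⟨v0, hv0S, hv0min⟩ := hScompact.exists_isMinOn hne contr.continuousOn
      have hv0ne : v0 ≠ 0 := by
        intro h
        rw [h] at hv0S
        have := hv0S.2
        simp at this
      refine ⟨r v0, hr_pos v0 hv0S.1 hv0ne, ?_⟩
      intro x hx0
      by_cases hx : x = 0
      · simp [hx, hr0]
      · have hnx : (0:ℝ) < ‖x‖ := norm_pos_iff.2 hx
        have hv := hscale x hx0 hx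
        have h1 : r v0 ≤ r (‖x‖⁻¹ • x) := hv0min hv
        have h2 : r (‖x‖⁻¹ • x) = ‖x‖⁻¹ * r x := hr_smul _ (by positivity) x
        rw [h2] at h1
        have h3 := mul_le_mul_of_nonneg_right h1 hnx.le
        calc r v0 * ‖x‖ ≤ ‖x‖⁻¹ * r x * ‖x‖ := h3
          _ = r x := by field_simp
    · refine ⟨1, one_pos, ?_⟩
      intro x hx0
      by_cases hx : x = 0
      · simp [hx, hr0]
      · exact absurd ⟨_, hscale x hx0 hx⟩ hne
  obtain ⟨ε, hε, hεb⟩ := hεbound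
  -- compact sublevel set and minimizer
  set C0 : ℝ := ∑ i, t i * L i with hC0def
  set K : Set (Fin M → ℝ) := {x | (∑ j, x j = 0) ∧ Φ x ≤ Φ 0} with hKdef
  have h0K : (0 : Fin M → ℝ) ∈ K := ⟨by simp, le_refl _⟩
  have hKsub : K ⊆ Metric.closedBall 0 ((Φ 0 - C0)/ε) := by
    rintro x ⟨hx0, hxΦ⟩
    rw [Metric.mem_closedBall, dist_zero_right, le_div_iff₀ hε]
    have h1 := hεb x hx0
    have h2 := hΦr x
    nlinarith
  have hKclosed : IsClosed K := by
    have : K = {x : Fin M → ℝ | ∑ j, x j = 0} ∩ {x | Φ x ≤ Φ 0} := rfl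
    rw [this]
    exact IsClosed.inter
      (isClosed_eq (continuous_finset_sum _ fun j _ => continuous_apply j) continuous_const)
      (isClosed_le contΦ continuous_const)
  have hKcompact : IsCompact K :=
    Metric.isCompact_of_isClosed_isBounded hKclosed
      (Bornology.IsBounded.subset Metric.isBounded_closedBall hKsub)
  obtain ⟨xs, hxsK, hxsmin⟩ := hKcompact.exists_isMinOn ⟨0, h0K⟩ contΦ.continuousOn
  -- shift invariance
  have hshift : ∀ (x : Fin M → ℝ) (a : ℝ), Φ (fun m => x m + a) = Φ x := by
    intro x a
    have hGshift : ∀ i, G (fun m => x m + a) i = Real.exp (-a) * G x i := by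
      intro i
      have h1 : G (fun m => x m + a) i = ∑ m, (c i m / t i) * Real.exp (-(x m + a)) := rfl
      rw [h1, Finset.mul_sum]
      refine Finset.sum_congr rfl fun m _ => ?_
      rw [neg_add, Real.exp_add]
      ring
    have hlog : ∀ i, Real.log (Real.exp (-a) * G x i) = -a + Real.log (G x i) := fun i => by
      rw [Real.log_mul (Real.exp_ne_zero _) (ne_of_gt (hG x i)), Real.log_exp]
    have hΦ1 : Φ (fun m => x m + a) =
        (∑ j, s j * (x j + a)) + ∑ i, t i * (-a + Real.log (G x i)) := by
      simp only [hΦdef]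
      congr 1
      exact Finset.sum_congr rfl fun i _ => by rw [hGshift i, hlog i]
    rw [hΦ1]
    simp only [mul_add]
    rw [Finset.sum_add_distrib, Finset.sum_add_distrib]
    have h1 : ∑ j, s j * a = (∑ j, s j) * a := by rw [Finset.sum_mul]
    have h2 : ∑ i, t i * (-a) = (∑ i, t i) * (-a) := by rw [Finset.sum_mul]
    rw [h1, h2, hst]
    simp only [hΦdef]
    ring
  -- global minimality
  have hglobal : ∀ y, Φ xs ≤ Φ y := by
    intro y
    set a : ℝ := (∑ j, y j) / M with hadef
    set y' : Fin M → ℝ := fun m => y m - a with hy'def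
    have hy'0 : ∑ j, y' j = 0 := by
      have h1 : ∑ j, y' j = (∑ j, y j) - M * a := by
        simp only [hy'def, Finset.sum_sub_distrib]
        rw [Finset.sum_const, Finset.card_univ, Fintype.card_fin, nsmul_eq_mul]
      rw [h1, hadef]
      have hMne : (M : ℝ) ≠ 0 := Nat.cast_ne_zero.mpr hM.ne'
      field_simp
      ring
    have hyy' : Φ y = Φ y' := by
      have h1 : (fun m => y' m + a) = y := by
        funext m
        simp [hy'def]
      rw [← h1, hshift]
    rcases le_or_gt (Φ y') (Φ 0) with h | h
    · rw [hyy']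
      exact hxsmin ⟨hy'0, h⟩
    · calc Φ xs ≤ Φ 0 := hxsmin h0K
        _ ≤ Φ y' := h.le
        _ = Φ y := hyy'.symm
  -- first-order conditions
  have hderiv : ∀ j, s j = Real.exp (-(xs j)) * ∑ i, c i j / G xs i := by
    intro j
    set δ : Fin M → ℝ := fun m => if m = j then 1 else 0 with hδdef
    set ζ : ℝ → (Fin M → ℝ) := fun u m => xs m + u * δ m with hζdef
    have hζ0 : ζ 0 = xs := by funext m; simp [hζdef]
    set ψ : ℝ → ℝ := fun u => Φ (ζ u) with hψdef
    have hlocmin : IsLocalMin ψ 0 := by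
      apply Filter.Eventually.of_forall
      intro u
      show ψ 0 ≤ ψ u
      simp only [hψdef, hζ0]
      exact hglobal (ζ u)
    have hD : HasDerivAt ψ ((∑ m, s m * δ m) +
        ∑ i, t i * ((∑ m, (c i m / t i) * (Real.exp (-(xs m)) * (-δ m))) / G xs i)) 0 := by
      have hbase : ∀ m : Fin M, HasDerivAt (fun u : ℝ => xs m + u * δ m) (δ m) 0 := by
        intro m
        simpa using ((hasDerivAt_id (0:ℝ)).mul_const (δ m)).const_add (xs m)
      apply HasDerivAt.add
      · exact HasDerivAt.fun_sum (fun m _ => (hbase m).const_mul (s m))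
      · apply HasDerivAt.fun_sum
        intro i _
        have hin : HasDerivAt (fun u => ∑ m, (c i m / t i) * Real.exp (-(ζ u m)))
            (∑ m, (c i m / t i) * (Real.exp (-(xs m)) * (-δ m))) 0 := by
          apply HasDerivAt.fun_sum
          intro m _
          have h1 : HasDerivAt (fun u : ℝ => -(xs m + u * δ m)) (-δ m) 0 := (hbase m).neg
          have h2 := h1.exp
          have h3 := h2.const_mul (c i m / t i)
          have h4 : Real.exp (-(xs m + 0 * δ m)) = Real.exp (-(xs m)) := by norm_num
          simpa [hζdef, h4] using h3
        have hne : (∑ m, (c i m / t i) * Real.exp (-(ζ 0 m))) ≠ 0 := by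
          rw [hζ0]
          exact ne_of_gt (hG xs i)
        have h5 := (hin.log hne).const_mul (t i)
        have h6 : (fun u => t i * Real.log (∑ m, (c i m / t i) * Real.exp (-(ζ u m))))
            = fun u => t i * Real.log (G (ζ u) i) := rfl
        rw [h6] at h5
        have h7 : (∑ m, (c i m / t i) * Real.exp (-(ζ 0 m))) = G xs i := by rw [hζ0]
        rw [h7] at h5
        exact h5
    have hzero := hlocmin.hasDerivAt_eq_zero hD
    have hsum1 : ∑ m, s m * δ m = s j := by
      simp [hδdef, mul_ite]
    have hsum2 : ∀ i, (∑ m, (c i m / t i) * (Real.exp (-(xs m)) * (-δ m)))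
        = -((c i j / t i) * Real.exp (-(xs j))) := by
      intro i
      have : ∀ m, (c i m / t i) * (Real.exp (-(xs m)) * (-δ m))
          = if m = j then -((c i j / t i) * Real.exp (-(xs j))) else 0 := by
        intro m
        by_cases h : m = j
        · subst h; simp [hδdef]
        · simp [hδdef, h]
      rw [Finset.sum_congr rfl (fun m _ => this m), Finset.sum_ite_eq' univ j]
      simp
    rw [hsum1] at hzero
    have h8 : ∑ i, t i * ((∑ m, (c i m / t i) * (Real.exp (-(xs m)) * (-δ m))) / G xs i)
        = -(Real.exp (-(xs j)) * ∑ i, c i j / G xs i) := by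
      have hrhs : -(Real.exp (-(xs j)) * ∑ i, c i j / G xs i)
          = ∑ i, -(Real.exp (-(xs j)) * (c i j / G xs i)) := by
        rw [Finset.mul_sum, ← Finset.sum_neg_distrib]
      rw [hrhs]
      refine Finset.sum_congr rfl fun i _ => ?_
      rw [hsum2 i]
      have hti : t i ≠ 0 := ne_of_gt (ht i)
      have hGi : G xs i ≠ 0 := ne_of_gt (hG xs i)
      field_simp
    rw [h8] at hzero
    linarith
  -- assemble solution
  refine ⟨fun j => Real.exp (xs j), fun i => G xs i,
    fun j => Real.exp_pos _, fun i => hG xs i, ?_, ?_⟩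
  · intro j
    have hsj : (∑ n', d n' j) = s j := rfl
    have hterm : ∀ n, (d n j / (∑ n', d n' j)) * (e n j / G xs n) = (c n j / G xs n) / s j := by
      intro n
      rw [hsj]
      have : c n j = d n j * e n j := rfl
      rw [this]
      simp only [div_eq_mul_inv]
      ring
    rw [Finset.sum_congr rfl (fun n _ => hterm n), ← Finset.sum_div]
    have h := hderiv j
    have hsj' : s j ≠ 0 := ne_of_gt (hs j)
    have hE : Real.exp (-(xs j)) = (Real.exp (xs j))⁻¹ := Real.exp_neg _
    rw [hE] at h
    have hEne : Real.exp (xs j) ≠ 0 := Real.exp_ne_zero _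
    field_simp at h ⊢
    linarith [h]
  · intro i
    show G xs i = _
    have hti : (∑ m', d i m') = t i := rfl
    refine Finset.sum_congr rfl fun m _ => ?_
    rw [hti, Real.exp_neg]
    have : c i m = d i m * e i m := rfl
    rw [this]
    simp only [div_eq_mul_inv]
    ring




lemma aux1 (A B c y : ℝ) (hc : c ≠ 0) (hy : y ≠ 0) :
    c⁻¹ * (A * (B / y)) = A * (B / (c * y)) := by
  field_simp

lemma aux2 (A B c y : ℝ) (hc : c ≠ 0) (hy : y ≠ 0) :
    c * (A * (B / y)) = A * (B / (c⁻¹ * y)) := by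
  field_simp

lemma unique_sol {N M : ℕ} (hN : 0 < N) (hM : 0 < M) (d e : Fin N → Fin M → ℝ)
    (hd0 : ∀ i j, 0 ≤ d i j) (he0 : ∀ i j, 0 ≤ e i j)
    (hde : ∀ i j, 0 < d i j ↔ 0 < e i j)
    (hconn : ∀ J : Finset (Fin M), J.Nonempty → J ≠ univ →
      ∃ j ∈ J, ∃ l ∉ J, ∃ k, 0 < d k j ∧ 0 < d k l)
    (f f' : Fin M → ℝ) (g g' : Fin N → ℝ)
    (hf : ∀ j, 0 < f j) (hg : ∀ i, 0 < g i) (hsol : Th5Sol d e f g)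
    (hf' : ∀ j, 0 < f' j) (hg' : ∀ i, 0 < g' i) (hsol' : Th5Sol d e f' g') :
    ∃ γ : ℝ, 0 < γ ∧ (∀ j, f' j = γ * f j) ∧ (∀ i, g' i = γ⁻¹ * g i) := by
  classical
  haveI : Nonempty (Fin M) := ⟨⟨0, hM⟩⟩
  set γ : ℝ := univ.sup' univ_nonempty (fun j => f' j / f j) with hγdef
  obtain ⟨j0, _, hj0⟩ := Finset.exists_mem_eq_sup' (univ_nonempty) (fun j => f' j / f j)
  have hγpos : 0 < γ := by
    rw [hγdef, hj0]
    exact div_pos (hf' j0) (hf j0)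
  have hγne : γ ≠ 0 := ne_of_gt hγpos
  have hle : ∀ j, f' j ≤ γ * f j := by
    intro j
    have h1 : f' j / f j ≤ γ := Finset.le_sup' (fun j => f' j / f j) (mem_univ j)
    have h2 : f j ≠ 0 := ne_of_gt (hf j)
    calc f' j = (f' j / f j) * f j := by field_simp
      _ ≤ γ * f j := mul_le_mul_of_nonneg_right h1 (hf j).le
  -- pointwise inequalities on the g-side
  have hgle : ∀ i, γ⁻¹ * g i ≤ g' i := by
    intro i
    rw [hsol.2 i, hsol'.2 i, Finset.mul_sum]
    apply Finset.sum_le_sum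
    intro m _
    have hfm : f m ≠ 0 := ne_of_gt (hf m)
    rw [aux1 _ _ _ _ hγne hfm]
    apply mul_le_mul_of_nonneg_left _ (div_nonneg (hd0 i m) (Finset.sum_nonneg fun n _ => hd0 i n))
    exact div_le_div_of_nonneg_left (he0 i m) (hf' m) (hle m)
  -- the set of maximizers
  set J : Finset (Fin M) := univ.filter (fun j => f' j = γ * f j) with hJdef
  have hJne : J.Nonempty := by
    refine ⟨j0, ?_⟩
    simp only [hJdef, mem_filter, mem_univ, true_and]
    rw [hγdef, hj0]
    exact (div_mul_cancel₀ (f' j0) (ne_of_gt (hf j0))).symm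
  have hJuniv : J = univ := by
    by_contra hJprop
    obtain ⟨j, hjJ, l, hlJ, k, hkj, hkl⟩ := hconn J hJne hJprop
    have hjmax : f' j = γ * f j := by
      have := hjJ; simp only [hJdef, mem_filter] at this; exact this.2
    have hlstrict : f' l < γ * f l := by
      have h1 : f' l ≠ γ * f l := by
        intro h; exact hlJ (by simp [hJdef, h])
      exact lt_of_le_of_ne (hle l) h1
    -- strict inequality for g' k
    have hgklt : γ⁻¹ * g k < g' k := by
      rw [hsol.2 k, hsol'.2 k, Finset.mul_sum]
      apply Finset.sum_lt_sum
      · intro m _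
        rw [aux1 _ _ _ _ hγne (ne_of_gt (hf m))]
        exact mul_le_mul_of_nonneg_left
          (div_le_div_of_nonneg_left (he0 k m) (hf' m) (hle m))
          (div_nonneg (hd0 k m) (Finset.sum_nonneg fun n _ => hd0 k n))
      · refine ⟨l, mem_univ l, ?_⟩
        rw [aux1 _ _ _ _ hγne (ne_of_gt (hf l))]
        have hsum : 0 < ∑ m', d k m' :=
          Finset.sum_pos' (fun n _ => hd0 k n) ⟨l, mem_univ l, hkl⟩
        apply mul_lt_mul_of_pos_left _ (div_pos hkl hsum)
        exact div_lt_div_of_pos_left ((hde k l).1 hkl) (hf' l) hlstrict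
    -- now contradict maximality at j
    have hfjlt : f' j < γ * f j := by
      rw [hsol.1 j, hsol'.1 j, Finset.mul_sum]
      apply Finset.sum_lt_sum
      · intro i _
        have hgi : g i ≠ 0 := ne_of_gt (hg i)
        rw [aux2 _ _ _ _ hγne hgi]
        exact mul_le_mul_of_nonneg_left
          (div_le_div_of_nonneg_left (he0 i j) (mul_pos (inv_pos.2 hγpos) (hg i)) (hgle i))
          (div_nonneg (hd0 i j) (Finset.sum_nonneg fun n _ => hd0 n j))
      · refine ⟨k, mem_univ k, ?_⟩
        have hgk : g k ≠ 0 := ne_of_gt (hg k)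
        rw [aux2 _ _ _ _ hγne hgk]
        have hsum : 0 < ∑ n', d n' j :=
          Finset.sum_pos' (fun n _ => hd0 n j) ⟨k, mem_univ k, hkj⟩
        apply mul_lt_mul_of_pos_left _ (div_pos hkj hsum)
        exact div_lt_div_of_pos_left ((hde k j).1 hkj) (mul_pos (inv_pos.2 hγpos) (hg k)) hgklt
    exact absurd hjmax (ne_of_lt hfjlt)
  have hfγ : ∀ j, f' j = γ * f j := by
    intro j
    have : j ∈ J := hJuniv ▸ mem_univ j
    simp only [hJdef, mem_filter] at this
    exact this.2
  refine ⟨γ, hγpos, hfγ, ?_⟩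
  intro i
  rw [hsol.2 i, hsol'.2 i, Finset.mul_sum]
  refine Finset.sum_congr rfl fun m _ => ?_
  rw [hfγ m, ← aux1 _ _ _ _ hγne (ne_of_gt (hf m))]


end Stmt14Aux

theorem stmt14 {N M : ℕ} (hN : 0 < N) (hM : 0 < M)
    (q d e : Fin N → Fin M → ℝ)
    (hq0 : ∀ i j, 0 ≤ q i j)
    (hqrow : ∀ i, ∃ j, 0 < q i j)
    (hqcol : ∀ j, ∃ i, 0 < q i j)
    (hd0 : ∀ i j, 0 ≤ d i j) (he0 : ∀ i j, 0 ≤ e i j)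
    (hdsupp : ∀ i j, 0 < d i j ↔ 0 < q i j)
    (hesupp : ∀ i j, 0 < e i j ↔ 0 < q i j) :
    ((∃ (f : Fin M → ℝ) (g : Fin N → ℝ),
        (∀ j, 0 < f j) ∧ (∀ i, 0 < g i) ∧ Th5Sol d e f g) ∧
      (∀ (f f' : Fin M → ℝ) (g g' : Fin N → ℝ),
        (∀ j, 0 < f j) → (∀ i, 0 < g i) → Th5Sol d e f g →
        (∀ j, 0 < f' j) → (∀ i, 0 < g' i) → Th5Sol d e f' g' →
        ∃ γ : ℝ, 0 < γ ∧ (∀ j, f' j = γ * f j) ∧ (∀ i, g' i = γ⁻¹ * g i)))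
    ↔ QConnected q := by
  classical
  have hde : ∀ i j, 0 < d i j ↔ 0 < e i j :=
    fun i j => (hdsupp i j).trans (hesupp i j).symm
  constructor
  · rintro ⟨⟨f, g, hf, hg, hsol⟩, huniq⟩
    intro J hJne hJprop
    by_contra hcon
    push_neg at hcon
    -- hcon : ∀ j ∈ J, ∀ l ∉ J, ∀ k, 0 < q k j → ¬ 0 < q k l  (shape to check)
    set f' : Fin M → ℝ := fun j => if j ∈ J then 2 * f j else f j with hf'def
    set g' : Fin N → ℝ := fun i => if ∃ j ∈ J, 0 < q i j then 2⁻¹ * g i else g i with hg'def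
    have hf'pos : ∀ j, 0 < f' j := by
      intro j
      simp only [hf'def]
      split
      · linarith [hf j]
      · exact hf j
    have hg'pos : ∀ i, 0 < g' i := by
      intro i
      simp only [hg'def]
      split
      · linarith [hg i]
      · exact hg i
    -- key support facts
    have hgrow2 : ∀ n j, j ∈ J → 0 < d n j → g' n = 2⁻¹ * g n := by
      intro n j hjJ hd
      simp only [hg'def]
      rw [if_pos ⟨j, hjJ, (hdsupp n j).1 hd⟩]
    have hgrow1 : ∀ n j, j ∉ J → 0 < d n j → g' n = g n := by
      intro n j hjJ hd
      simp only [hg'def]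
      rw [if_neg]
      rintro ⟨j', hj'J, hq'⟩
      exact absurd ((hdsupp n j).1 hd) (not_lt.2 (hcon j' hj'J j hjJ n hq'))
    have hfcol2 : ∀ i m, (∃ j ∈ J, 0 < q i j) → 0 < d i m → f' m = 2 * f m := by
      intro i m hiR hd
      obtain ⟨j', hj'J, hq'⟩ := hiR
      have hmJ : m ∈ J := by
        by_contra hmJ
        exact absurd ((hdsupp i m).1 hd) (not_lt.2 (hcon j' hj'J m hmJ i hq'))
      simp only [hf'def]
      rw [if_pos hmJ]
    have hfcol1 : ∀ i m, ¬(∃ j ∈ J, 0 < q i j) → 0 < d i m → f' m = f m := by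
      intro i m hiR hd
      have hmJ : m ∉ J := fun hmJ => hiR ⟨m, hmJ, (hdsupp i m).1 hd⟩
      simp only [hf'def]
      rw [if_neg hmJ]
    have hsol' : Th5Sol d e f' g' := by
      constructor
      · intro j
        by_cases hjJ : j ∈ J
        · have h1 : f' j = 2 * f j := by simp only [hf'def]; rw [if_pos hjJ]
          rw [h1, hsol.1 j, Finset.mul_sum]
          refine Finset.sum_congr rfl fun n _ => ?_
          rcases eq_or_lt_of_le (hd0 n j) with hd | hd
          · rw [← hd]; simp
          · rw [hgrow2 n j hjJ hd]
            have hgn : g n ≠ 0 := ne_of_gt (hg n)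
            rw [Stmt14Aux.aux2 _ _ _ _ (by norm_num : (2:ℝ) ≠ 0) hgn]
        · have h1 : f' j = f j := by simp only [hf'def]; rw [if_neg hjJ]
          rw [h1, hsol.1 j]
          refine Finset.sum_congr rfl fun n _ => ?_
          rcases eq_or_lt_of_le (hd0 n j) with hd | hd
          · rw [← hd]; simp
          · rw [hgrow1 n j hjJ hd]
      · intro i
        by_cases hiR : ∃ j ∈ J, 0 < q i j
        · have h1 : g' i = 2⁻¹ * g i := by simp only [hg'def]; rw [if_pos hiR]
          rw [h1, hsol.2 i, Finset.mul_sum]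
          refine Finset.sum_congr rfl fun m _ => ?_
          rcases eq_or_lt_of_le (hd0 i m) with hd | hd
          · rw [← hd]; simp
          · rw [hfcol2 i m hiR hd]
            have hfm : f m ≠ 0 := ne_of_gt (hf m)
            rw [Stmt14Aux.aux1 _ _ _ _ (by norm_num : (2:ℝ) ≠ 0) hfm]
        · have h1 : g' i = g i := by simp only [hg'def]; rw [if_neg hiR]
          rw [h1, hsol.2 i]
          refine Finset.sum_congr rfl fun m _ => ?_
          rcases eq_or_lt_of_le (hd0 i m) with hd | hd
          · rw [← hd]; simp
          · rw [hfcol1 i m hiR hd]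
    obtain ⟨γ, hγpos, hγf, _⟩ := huniq f f' g g' hf hg hsol hf'pos hg'pos hsol'
    obtain ⟨j1, hj1⟩ := hJne
    obtain ⟨l1, hl1⟩ : ∃ l, l ∉ J := by
      by_contra h
      push_neg at h
      exact hJprop (Finset.eq_univ_iff_forall.2 h)
    have hγ2 : γ = 2 := by
      have h1 := hγf j1
      have h2 : f' j1 = 2 * f j1 := by simp only [hf'def]; rw [if_pos hj1]
      rw [h2] at h1
      have := hf j1
      nlinarith
    have hγ1 : γ = 1 := by
      have h1 := hγf l1
      have h2 : f' l1 = f l1 := by simp only [hf'def]; rw [if_neg hl1]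
      rw [h2] at h1
      have := hf l1
      nlinarith
    rw [hγ1] at hγ2
    norm_num at hγ2
  · intro hconn
    have ht : ∀ i, 0 < ∑ m, d i m := by
      intro i
      obtain ⟨j, hj⟩ := hqrow i
      exact Finset.sum_pos' (fun m _ => hd0 i m) ⟨j, mem_univ j, (hdsupp i j).2 hj⟩
    have hs : ∀ j, 0 < ∑ n, d n j := by
      intro j
      obtain ⟨i, hi⟩ := hqcol j
      exact Finset.sum_pos' (fun n _ => hd0 n j) ⟨i, mem_univ i, (hdsupp i j).2 hi⟩
    have hconn' : ∀ J : Finset (Fin M), J.Nonempty → J ≠ univ →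
        ∃ j ∈ J, ∃ l ∉ J, ∃ k, 0 < d k j ∧ 0 < d k l := by
      intro J h1 h2
      obtain ⟨j, hjJ, l, hlJ, k, hkj, hkl⟩ := hconn J h1 h2
      exact ⟨j, hjJ, l, hlJ, k, (hdsupp k j).2 hkj, (hdsupp k l).2 hkl⟩
    refine ⟨Stmt14Aux.exists_sol hN hM d e hd0 he0 hde ht hs hconn', ?_⟩
    intro f f' g g' hf hg hsol hf' hg' hsol'
    exact Stmt14Aux.unique_sol hN hM d e hd0 he0 hde hconn' f f' g g' hf hg hsol hf' hg' hsol'
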